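/- Conversely, if a, b, c ∈ ℝ² satisfy det(b-a, c-a) > 0 and w lies in the interior of the convex hull of {a,b,c}, then det(b-a, w-a) > 0, det(c-b, w-b) > 0, and det(a-c, w-c) > 0. -/

import Mathlib

/-- Order type determinant: det(v-u, w-u). -/
def det3 (u v w : ℝ × ℝ) : ℝ :=
  (v.1 - u.1) * (w.2 - u.2) - (v.2 - u.2) * (w.1 - u.1)

lemma halfplane_convex (p q r : ℝ) :
    Convex ℝ {x : ℝ × ℝ | 0 ≤ p * x.1 + q * x.2 + r} := by
  intro x hx y hy s t hs ht hst
  simp only [Set.mem_setOf_eq] at *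
  have h1 : (s • x + t • y).1 = s * x.1 + t * y.1 := rfl
  have h2 : (s • x + t • y).2 = s * x.2 + t * y.2 := rfl
  rw [h1, h2]
  have hr : s * r + t * r = r := by rw [← add_mul, hst, one_mul]
  nlinarith [mul_nonneg hs hx, mul_nonneg ht hy]

lemma aux_pos (p q r : ℝ) (hpq : 0 < p ^ 2 + q ^ 2) (S : Set (ℝ × ℝ))
    (hS : ∀ x ∈ S, 0 ≤ p * x.1 + q * x.2 + r) {w : ℝ × ℝ}
    (hw : w ∈ interior S) : 0 < p * w.1 + q * w.2 + r := by
  by_contra h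
  push_neg at h
  obtain ⟨ε, hε, hball⟩ := Metric.isOpen_iff.1 isOpen_interior w hw
  set t : ℝ := ε / (2 * (|p| + |q| + 1)) with ht_def
  have hden : 0 < 2 * (|p| + |q| + 1) := by positivity
  have ht : 0 < t := div_pos hε hden
  set z : ℝ × ℝ := (w.1 - t * p, w.2 - t * q) with hz_def
  have hdist : dist z w < ε := by
    rw [Prod.dist_eq]
    have hd1 : dist z.1 w.1 = t * |p| := by
      simp [hz_def, Real.dist_eq, abs_mul, abs_of_pos ht]
    have hd2 : dist z.2 w.2 = t * |q| := by
      simp [hz_def, Real.dist_eq, abs_mul, abs_of_pos ht]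
    have hpe : t * |p| < ε := by
      have : t * |p| ≤ t * (|p| + |q| + 1) := by
        apply mul_le_mul_of_nonneg_left _ ht.le
        nlinarith [abs_nonneg q]
      have h2 : t * (2 * (|p| + |q| + 1)) = ε := by
        rw [ht_def]; exact div_mul_cancel₀ ε hden.ne'
      nlinarith [abs_nonneg p, abs_nonneg q]
    have hqe : t * |q| < ε := by
      have : t * |q| ≤ t * (|p| + |q| + 1) := by
        apply mul_le_mul_of_nonneg_left _ ht.le
        nlinarith [abs_nonneg p]
      have h2 : t * (2 * (|p| + |q| + 1)) = ε := by
        rw [ht_def]; exact div_mul_cancel₀ ε hden.ne'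
      nlinarith [abs_nonneg p, abs_nonneg q]
    exact max_lt (hd1 ▸ hpe) (hd2 ▸ hqe)
  have hzS : z ∈ S := interior_subset (hball hdist)
  have := hS z hzS
  simp only [hz_def] at this
  nlinarith [mul_pos ht hpq]

theorem left_of_sides_of_mem_interior_triangle (a b c w : ℝ × ℝ)
    (habc : 0 < det3 a b c)
    (hw : w ∈ interior (convexHull ℝ ({a, b, c} : Set (ℝ × ℝ)))) :
    0 < det3 a b w ∧ 0 < det3 b c w ∧ 0 < det3 c a w := by
  have key : ∀ u v x : ℝ × ℝ, det3 u v x =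
      (-(v.2 - u.2)) * x.1 + (v.1 - u.1) * x.2 +
      ((v.2 - u.2) * u.1 - (v.1 - u.1) * u.2) := by
    intro u v x; simp [det3]; ring
  have main : ∀ u v x : ℝ × ℝ, ({a, b, c} : Set (ℝ × ℝ)) ⊆
      {y : ℝ × ℝ | 0 ≤ (-(v.2 - u.2)) * y.1 + (v.1 - u.1) * y.2 +
        ((v.2 - u.2) * u.1 - (v.1 - u.1) * u.2)} →
      0 < (v.1 - u.1) ^ 2 + (v.2 - u.2) ^ 2 →
      0 < det3 u v w := by
    intro u v x hsub hne
    rw [key]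
    apply aux_pos _ _ _ (by nlinarith) (convexHull ℝ ({a, b, c} : Set (ℝ × ℝ)))
      _ hw
    intro y hy
    have := convexHull_min hsub (halfplane_convex _ _ _) hy
    exact this
  have hne_ab : 0 < (b.1 - a.1) ^ 2 + (b.2 - a.2) ^ 2 := by
    by_contra h; push_neg at h
    have h1 : b.1 = a.1 := by nlinarith [sq_nonneg (b.1 - a.1), sq_nonneg (b.2 - a.2)]
    have h2 : b.2 = a.2 := by nlinarith [sq_nonneg (b.1 - a.1), sq_nonneg (b.2 - a.2)]
    simp [det3, h1, h2] at habc
  have hne_bc : 0 < (c.1 - b.1) ^ 2 + (c.2 - b.2) ^ 2 := by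
    by_contra h; push_neg at h
    have h1 : c.1 = b.1 := by nlinarith [sq_nonneg (c.1 - b.1), sq_nonneg (c.2 - b.2)]
    have h2 : c.2 = b.2 := by nlinarith [sq_nonneg (c.1 - b.1), sq_nonneg (c.2 - b.2)]
    simp only [det3] at habc; rw [h1, h2] at habc; nlinarith
  have hne_ca : 0 < (a.1 - c.1) ^ 2 + (a.2 - c.2) ^ 2 := by
    by_contra h; push_neg at h
    have h1 : a.1 = c.1 := by nlinarith [sq_nonneg (a.1 - c.1), sq_nonneg (a.2 - c.2)]
    have h2 : a.2 = c.2 := by nlinarith [sq_nonneg (a.1 - c.1), sq_nonneg (a.2 - c.2)]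
    simp only [det3] at habc; rw [← h1, ← h2] at habc; nlinarith
  refine ⟨main a b a ?_ hne_ab, main b c b ?_ hne_bc, main c a c ?_ hne_ca⟩ <;>
  · intro y hy
    simp only [Set.mem_insert_iff, Set.mem_singleton_iff] at hy
    rcases hy with rfl | rfl | rfl <;>
    · simp only [Set.mem_setOf_eq, det3] at habc ⊢; nlinarith
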